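/- Let N ∈ ℕ, let g : ℕ → ℝ satisfy g(0) > 0 and g(t) ≥ g(t+1) for all t ∈ {0,…,N−1} (g is decreasing on [0,N]), and let ε : ℕ → ℝ satisfy ε(0) > 0 and ∑_{k=0}^{m} g(m−k) ε(k) = 0 for every m ∈ {1,…,N}. Define the partial sums σ(m) = ∑_{j=0}^{m} ε(j). Then σ(m) ≥ 0 for every m ∈ {0,…,N}. -/
import Mathlib


open Finset

/-- Sign-preservation lemma (Abel summation step in the proof of Theorem 3):
if `g` is decreasing on `[0,N]` with `g(0) > 0`, `ε(0) > 0`, and the convolution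
constraint `∑_{k=0}^{m} g(m−k) ε(k) = 0` holds for every `m ∈ {1,…,N}`, then all the
partial sums `σ(m) = ∑_{j=0}^{m} ε(j)` are nonnegative for `m ∈ {0,…,N}`. -/
theorem partial_sums_nonneg_of_decreasing_convolution (N : ℕ) (g ε : ℕ → ℝ)
    (hg0 : 0 < g 0)
    (hgdec : ∀ t < N, g (t + 1) ≤ g t)
    (hε0 : 0 < ε 0)
    (hconv : ∀ m, 1 ≤ m → m ≤ N → ∑ k ∈ Finset.range (m + 1), g (m - k) * ε k = 0) :
    ∀ m ≤ N, 0 ≤ ∑ j ∈ Finset.range (m + 1), ε j := by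
  intro m
  induction m using Nat.strong_induction_on with
  | _ m ih =>
    intro hmN
    rcases Nat.eq_zero_or_pos m with rfl | hm
    · simpa using hε0.le
    · have habel := Finset.sum_range_by_parts (fun i => g (m - i)) ε (m + 1)
      simp only [smul_eq_mul, Nat.add_sub_cancel, Nat.sub_self] at habel
      have hc := hconv m hm hmN
      rw [habel] at hc
      have key : g 0 * ∑ j ∈ Finset.range (m + 1), ε j
          = ∑ i ∈ Finset.range m, (g (m - (i + 1)) - g (m - i)) * ∑ j ∈ Finset.range (i + 1), ε j := by
        linarith [hc]
      have hnn : 0 ≤ ∑ i ∈ Finset.range m, (g (m - (i + 1)) - g (m - i)) *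
          ∑ j ∈ Finset.range (i + 1), ε j := by
        apply Finset.sum_nonneg
        intro i hi
        have hi' : i < m := Finset.mem_range.mp hi
        have h1 : m - i = (m - (i + 1)) + 1 := by omega
        have h2 : m - (i + 1) < N := by omega
        have hg : g (m - i) ≤ g (m - (i + 1)) := by
          rw [h1]; exact hgdec _ h2
        have hσ : 0 ≤ ∑ j ∈ Finset.range (i + 1), ε j := ih i hi' (by omega)
        exact mul_nonneg (by linarith) hσ
      nlinarith [key, hnn]
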